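/- Let F : R^d → R be L-smooth and bounded below, and consider the update x̄_{t+1} = x̄_t + η_t(x̂_{t+1} - x̄_t) where x̂_{t+1} = argmin_{x} {⟨w̄_t, x⟩ + (1/(2γ))(x - x̄_t)^T A_t (x - x̄_t)} with A_t ⪰ ρ I_d. Then for 0 < η_t ≤ 1 and 0 < γ ≤ ρ/(2Lη_t): F(x̄_{t+1}) ≤ F(x̄_t) + (γη_t/ρ)||∇F(x̄_t) - w̄_t||² - (ρη_t/(2γ))||x̂_{t+1} - x̄_t||². -/

import Mathlib

open scoped RealInnerProductSpace

/-- One-step descent for an adaptive mirror step: with `F` `L`-smooth and bounded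
below, `A ⪰ ρ I` symmetric positive definite, the solution
`x̂ = argmin_x {⟨w, x⟩ + (1/(2γ))(x - x̄)ᵀ A (x - x̄)}`, i.e. `A x̂ = A x̄ - γ w`,
and the update `x⁺ = x̄ + η (x̂ - x̄)`, for `0 < η ≤ 1` and `0 < γ ≤ ρ/(2Lη)`:
`F(x⁺) ≤ F(x̄) + (γη/ρ)‖∇F(x̄) - w‖² - (ρη/(2γ))‖x̂ - x̄‖²`. -/
lemma descent_lemma {d : ℕ} (F : EuclideanSpace ℝ (Fin d) → ℝ) (L : ℝ) (hL : 0 < L)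
    (hF : Differentiable ℝ F)
    (hsmooth : ∀ x1 x2, ‖gradient F x1 - gradient F x2‖ ≤ L * ‖x1 - x2‖)
    (x v : EuclideanSpace ℝ (Fin d)) :
    F (x + v) ≤ F x + ⟪gradient F x, v⟫ + L / 2 * ‖v‖ ^ 2 := by
  -- the derivative of t ↦ F (x + t • v)
  have hderiv : ∀ t : ℝ, HasDerivAt (fun t : ℝ => F (x + t • v))
      ⟪gradient F (x + t • v), v⟫ t := by
    intro t
    have h1 : HasDerivAt (fun t : ℝ => x + t • v) v t := by
      simpa using ((hasDerivAt_id t).smul_const v).const_add x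
    have h2 : HasFDerivAt F (InnerProductSpace.toDual ℝ _ (gradient F (x + t • v)))
        (x + t • v) := (hF _).hasGradientAt
    exact h2.comp_hasDerivAt t h1
  -- continuity of the gradient
  have hgc : Continuous fun y => gradient F y := by
    rw [Metric.continuous_iff]
    intro b ε hε
    refine ⟨ε / L, by positivity, fun a ha => ?_⟩
    have := hsmooth a b
    rw [dist_eq_norm] at *
    calc ‖gradient F a - gradient F b‖ ≤ L * ‖a - b‖ := this
      _ < L * (ε / L) := by
          rcases eq_or_ne a b with rfl | h
          · simpa using by positivity
          · exact mul_lt_mul_of_pos_left ha hL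
      _ = ε := by field_simp
  have hcont : Continuous fun t : ℝ => ⟪gradient F (x + t • v), v⟫ := by
    exact (Continuous.inner (hgc.comp (by continuity)) continuous_const)
  have hint : IntervalIntegrable (fun t : ℝ => ⟪gradient F (x + t • v), v⟫)
      MeasureTheory.volume 0 1 := hcont.intervalIntegrable 0 1
  have hFTC : ∫ t in (0:ℝ)..1, ⟪gradient F (x + t • v), v⟫ = F (x + v) - F x := by
    have := intervalIntegral.integral_eq_sub_of_hasDerivAt
      (fun t _ => hderiv t) hint
    simpa using this
  have hbound : ∫ t in (0:ℝ)..1, ⟪gradient F (x + t • v), v⟫ ≤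
      ∫ t in (0:ℝ)..1, (⟪gradient F x, v⟫ + L * t * ‖v‖ ^ 2) := by
    apply intervalIntegral.integral_mono_on (by norm_num) hint
    · exact (continuous_const.add (by continuity)).intervalIntegrable 0 1
    · intro t ht
      rcases ht with ⟨ht0, ht1⟩
      have key : ⟪gradient F (x + t • v) - gradient F x, v⟫ ≤ L * t * ‖v‖ ^ 2 := by
        calc ⟪gradient F (x + t • v) - gradient F x, v⟫
            ≤ ‖gradient F (x + t • v) - gradient F x‖ * ‖v‖ :=
              real_inner_le_norm _ _
          _ ≤ (L * ‖(x + t • v) - x‖) * ‖v‖ := by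
              have := hsmooth (x + t • v) x
              exact mul_le_mul_of_nonneg_right this (norm_nonneg _)
          _ = L * t * ‖v‖ ^ 2 := by
              rw [add_sub_cancel_left, norm_smul]
              simp [abs_of_nonneg ht0]
              ring
      have := inner_sub_left (𝕜 := ℝ) (gradient F (x + t • v)) (gradient F x) v
      linarith [key, this.symm.le, this.le]
  have hrhs : ∫ t in (0:ℝ)..1, (⟪gradient F x, v⟫ + L * t * ‖v‖ ^ 2) =
      ⟪gradient F x, v⟫ + L / 2 * ‖v‖ ^ 2 := by
    rw [intervalIntegral.integral_add (intervalIntegrable_const)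
      (Continuous.intervalIntegrable (show Continuous fun t : ℝ => L * t * ‖v‖ ^ 2 from (continuous_const.mul continuous_id).mul continuous_const) 0 1)]
    simp [mul_assoc]
    ring
  linarith [hFTC ▸ hbound, hrhs ▸ hbound]

theorem adaptive_descent_step (d : ℕ) (F : EuclideanSpace ℝ (Fin d) → ℝ)
    (L ρ γ η : ℝ) (hL : 0 < L) (hρ : 0 < ρ)
    (hF : Differentiable ℝ F)
    (hsmooth : ∀ x1 x2, ‖gradient F x1 - gradient F x2‖ ≤ L * ‖x1 - x2‖)
    (hbdd : ∃ b, ∀ x, b ≤ F x)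
    (A : EuclideanSpace ℝ (Fin d) →L[ℝ] EuclideanSpace ℝ (Fin d))
    (hA : IsSelfAdjoint A)
    (hApos : ∀ v, ρ * ‖v‖ ^ 2 ≤ ⟪v, A v⟫)
    (w xbar xhat xnext : EuclideanSpace ℝ (Fin d))
    (hη : 0 < η) (hη1 : η ≤ 1) (hγ : 0 < γ) (hγ2 : γ ≤ ρ / (2 * L * η))
    (hxhat : A xhat = A xbar - γ • w)
    (hxnext : xnext = xbar + η • (xhat - xbar)) :
    F xnext ≤ F xbar + (γ * η / ρ) * ‖gradient F xbar - w‖ ^ 2 -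
      (ρ * η / (2 * γ)) * ‖xhat - xbar‖ ^ 2 := by
  set s : EuclideanSpace ℝ (Fin d) := xhat - xbar with hs
  set g : EuclideanSpace ℝ (Fin d) := gradient F xbar with hg
  set N : ℝ := ‖s‖ ^ 2 with hN
  set G : ℝ := ‖g - w‖ ^ 2 with hG
  have hNnn : 0 ≤ N := by positivity
  -- descent lemma
  have hd : F xnext ≤ F xbar + η * ⟪g, s⟫ + L / 2 * (η ^ 2 * N) := by
    have := descent_lemma F L hL hF hsmooth xbar (η • s)
    rw [hxnext]
    calc F (xbar + η • s) ≤ F xbar + ⟪g, η • s⟫ + L / 2 * ‖η • s‖ ^ 2 := this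
      _ = F xbar + η * ⟪g, s⟫ + L / 2 * (η ^ 2 * N) := by
          rw [real_inner_smul_right, norm_smul, mul_pow, Real.norm_eq_abs, abs_of_pos hη, hN]
  -- the subproblem optimality gives γ • w = -(A s)
  have h4 : γ • w = -(A s) := by
    rw [hs, map_sub, hxhat]
    abel
  have hws : γ * ⟪w, s⟫ ≤ -(ρ * N) := by
    have h5 : γ * ⟪w, s⟫ = -⟪s, A s⟫ := by
      rw [← real_inner_smul_left, h4, inner_neg_left, real_inner_comm]
    rw [h5]
    have := hApos s
    rw [← hN] at this
    linarith
  -- Young's inequality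
  have hyoung : ⟪g - w, s⟫ * (4 * ρ * γ) ≤ 4 * γ ^ 2 * G + ρ ^ 2 * N := by
    have hab : ⟪g - w, s⟫ ≤ ‖g - w‖ * ‖s‖ := real_inner_le_norm _ _
    nlinarith [sq_nonneg (2 * γ * ‖g - w‖ - ρ * ‖s‖),
      mul_le_mul_of_nonneg_right hab (by positivity : (0:ℝ) ≤ 4 * ρ * γ)]
  have hsplit : ⟪g, s⟫ = ⟪g - w, s⟫ + ⟪w, s⟫ := by
    rw [inner_sub_left]; ring
  have h2 : 2 * L * η * γ ≤ ρ := by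
    have := (le_div_iff₀ (by positivity : (0:ℝ) < 2 * L * η)).mp hγ2
    linarith
  have hpos : (0:ℝ) < ρ * γ * 4 := by positivity
  have hK : η * ⟪g, s⟫ + L / 2 * (η ^ 2 * N) ≤
      (γ * η / ρ) * G - (ρ * η / (2 * γ)) * N := by
    rw [← mul_le_mul_iff_right₀ hpos]
    have e1 : ρ * γ * 4 * ((γ * η / ρ) * G - (ρ * η / (2 * γ)) * N) =
        4 * γ ^ 2 * η * G - 2 * ρ ^ 2 * η * N := by
      field_simp
      ring
    rw [e1, hsplit]
    nlinarith [mul_le_mul_of_nonneg_left hyoung hη.le,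
      mul_le_mul_of_nonneg_left hws (by positivity : (0:ℝ) ≤ 4 * ρ * η),
      mul_le_mul_of_nonneg_right h2 (by positivity : (0:ℝ) ≤ ρ * η * N)]
  linarith
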